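/- For n ≥ 2k ≥ 2, the number of unordered pairs (I,J) of k-element subsets of [n] (allowing I = J) that are weakly separated equals b_{k,n} = C(n,k) + Σ_{j=1}^{k} j · n!/((k-j)! (2j)! (n-k-j)!). -/

import Mathlib

open Finset

/-- `allLT I J` means `max I < min J` (vacuously true if either set is empty). -/
def allLT (I J : Finset ℕ) : Prop := ∀ i ∈ I, ∀ j ∈ J, i < j

/-- `I` and `J` are weakly separated. -/
def WeaklySeparated (I J : Finset ℕ) : Prop :=
  (∃ I1 I2 : Finset ℕ, Disjoint I1 I2 ∧ I1 ∪ I2 = I \ J ∧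
      allLT I1 (J \ I) ∧ allLT (J \ I) I2) ∨
  (∃ J1 J2 : Finset ℕ, Disjoint J1 J2 ∧ J1 ∪ J2 = J \ I ∧
      allLT J1 (I \ J) ∧ allLT (I \ J) J2)

/-- the set `{i_a, i_{a+1}, ..., i_b}` of entries of `I` in (1-indexed) positions `a` to `b`. -/
def posSlice (I : Finset ℕ) (a b : ℕ) : Finset ℕ :=
  I.filter fun x => a ≤ (I.filter (· ≤ x)).card ∧ (I.filter (· ≤ x)).card ≤ b

/-- the pair of `k`-subsets `I`, `J` is noncrossing. -/
def Noncrossing (k : ℕ) (I J : Finset ℕ) : Prop :=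
  ∀ a b : ℕ, 1 ≤ a → a < b → b ≤ k →
    WeaklySeparated (posSlice I a b) (posSlice J a b) ∨
    posSlice I (a + 1) (b - 1) ≠ posSlice J (a + 1) (b - 1)

/-- the `a`-th smallest entry of `I` (1-indexed). -/
def nth (I : Finset ℕ) (a : ℕ) : ℕ := (I.sort (· ≤ ·)).getD (a - 1) 0

/-- `T` is a rectangular semistandard Young tableau with entries in `[n]`. -/
def IsSSYT {k m : ℕ} (n : ℕ) (T : Fin k → Fin m → ℕ) : Prop :=
  (∀ i j, T i j ∈ Finset.Icc 1 n) ∧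
  (∀ i (j j' : Fin m), j ≤ j' → T i j ≤ T i j') ∧
  (∀ (i i' : Fin k) j, i < i' → T i j < T i' j)

/-- split condition on a pair of (disjoint) sets -/
def Split (A B : Finset ℕ) : Prop :=
  (∃ A1 A2 : Finset ℕ, Disjoint A1 A2 ∧ A1 ∪ A2 = A ∧ allLT A1 B ∧ allLT B A2) ∨
  (∃ B1 B2 : Finset ℕ, Disjoint B1 B2 ∧ B1 ∪ B2 = B ∧ allLT B1 A ∧ allLT A B2)

lemma allLT_mono {A B A' B' : Finset ℕ} (h : allLT A B) (hA : A' ⊆ A) (hB : B' ⊆ B) :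
    allLT A' B' := fun i hi j hj => h i (hA hi) j (hB hj)

lemma allLT_take_drop {L : List ℕ} (hs : L.Pairwise (· < ·)) (s t : ℕ) (hst : s ≤ t) :
    allLT (L.take s).toFinset (L.drop t).toFinset := by
  intro x hx y hy
  simp only [List.mem_toFinset] at hx hy
  have h1 : x ∈ L.take t := by
    have he : (L.take t).take s = L.take s := by
      rw [List.take_take, min_eq_left hst]
    rw [← he] at hx
    exact (List.take_sublist _ _).mem hx
  have hp : (L.take t ++ L.drop t).Pairwise (· < ·) := by
    rw [List.take_append_drop]; exact hs
  exact (List.pairwise_append.mp hp).2.2 x h1 y hy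

lemma sorted_three_append {l1 l2 l3 : List ℕ} (h1 : l1.Pairwise (· < ·)) (h2 : l2.Pairwise (· < ·))
    (h3 : l3.Pairwise (· < ·)) (h12 : ∀ x ∈ l1, ∀ y ∈ l2, x < y)
    (h13 : ∀ x ∈ l1, ∀ y ∈ l3, x < y) (h23 : ∀ x ∈ l2, ∀ y ∈ l3, x < y) :
    (l1 ++ l2 ++ l3).Pairwise (· < ·) := by
  rw [List.pairwise_append, List.pairwise_append]
  refine ⟨⟨h1, h2, h12⟩, h3, ?_⟩
  intro a ha b hb
  rcases List.mem_append.mp ha with h | h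
  · exact h13 a h b hb
  · exact h23 a h b hb

/-- partition lemma: if a sorted list's elements split into three parts with all-lt
relations, the parts are the corresponding contiguous segments -/
lemma partition_eq {L : List ℕ} (hs : L.Pairwise (· < ·)) (X Y Z : Finset ℕ)
    (hU : X ∪ Y ∪ Z = L.toFinset)
    (hXY : allLT X Y) (hYZ : allLT Y Z) (hXZ : allLT X Z) :
    X = (L.take X.card).toFinset ∧ Y = ((L.drop X.card).take Y.card).toFinset ∧
      Z = (L.drop (X.card + Y.card)).toFinset := by
  classical
  set LX := X.sort (· ≤ ·) with hLX
  set LY := Y.sort (· ≤ ·) with hLY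
  set LZ := Z.sort (· ≤ ·) with hLZ
  have tX : LX.toFinset = X := Finset.sort_toFinset _ _
  have tY : LY.toFinset = Y := Finset.sort_toFinset _ _
  have tZ : LZ.toFinset = Z := Finset.sort_toFinset _ _
  have mX : ∀ x, x ∈ LX ↔ x ∈ X := fun x => Finset.mem_sort _
  have mY : ∀ x, x ∈ LY ↔ x ∈ Y := fun x => Finset.mem_sort _
  have mZ : ∀ x, x ∈ LZ ↔ x ∈ Z := fun x => Finset.mem_sort _
  have sM : (LX ++ LY ++ LZ).Pairwise (· < ·) := by
    apply sorted_three_append (Finset.sortedLT_sort X).pairwise (Finset.sortedLT_sort Y).pairwise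
      (Finset.sortedLT_sort Z).pairwise
    · exact fun x hx y hy => hXY x ((mX x).mp hx) y ((mY y).mp hy)
    · exact fun x hx y hy => hXZ x ((mX x).mp hx) y ((mZ y).mp hy)
    · exact fun x hx y hy => hYZ x ((mY x).mp hx) y ((mZ y).mp hy)
  have hM : LX ++ LY ++ LZ = L := by
    apply List.Perm.eq_of_pairwise (fun a b _ _ h1 h2 => absurd (lt_trans h1 h2) (lt_irrefl a)) sM hs
    apply List.perm_of_nodup_nodup_toFinset_eq sM.nodup hs.nodup
    rw [List.toFinset_append, List.toFinset_append, tX, tY, tZ, hU]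
  have lenX : LX.length = X.card := Finset.length_sort _
  have lenY : LY.length = Y.card := Finset.length_sort _
  refine ⟨?_, ?_, ?_⟩
  · rw [← hM, ← lenX]
    rw [List.append_assoc, List.take_left, tX]
  · rw [← hM, ← lenX, ← lenY, List.append_assoc, List.drop_left, List.take_left, tY]
  · rw [← hM, ← lenX, ← lenY]
    have : (LX ++ LY ++ LZ).drop (LX.length + LY.length) = LZ := by
      rw [← List.length_append, List.drop_left]
    rw [this, tZ]

lemma mem_take_iff {L : List ℕ} {t : ℕ} {x : ℕ} :
    x ∈ L.take t ↔ ∃ i : Fin L.length, (i : ℕ) < t ∧ L.get i = x := by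
  constructor
  · intro hx
    rw [List.mem_iff_get] at hx
    obtain ⟨n, hn⟩ := hx
    have hlen : (L.take t).length = min t L.length := List.length_take ..
    have h1 : (n : ℕ) < t := lt_of_lt_of_le n.isLt (by rw [hlen]; exact min_le_left ..)
    have h2 : (n : ℕ) < L.length := lt_of_lt_of_le n.isLt (by rw [hlen]; exact min_le_right ..)
    refine ⟨⟨n, h2⟩, h1, ?_⟩
    rw [← hn]
    simp [List.get_eq_getElem, List.getElem_take]
  · rintro ⟨i, hi, rfl⟩
    rw [List.mem_iff_get]
    have hl : (i : ℕ) < (L.take t).length := by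
      rw [List.length_take]; exact lt_min hi i.isLt
    exact ⟨⟨i, hl⟩, by simp [List.get_eq_getElem, List.getElem_take]⟩

lemma mem_drop_iff {L : List ℕ} {t : ℕ} {x : ℕ} :
    x ∈ L.drop t ↔ ∃ i : Fin L.length, t ≤ (i : ℕ) ∧ L.get i = x := by
  constructor
  · intro hx
    rw [List.mem_iff_get] at hx
    obtain ⟨n, hn⟩ := hx
    have h2 : t + (n : ℕ) < L.length := by
      have h := n.isLt
      have hlen : (L.drop t).length = L.length - t := List.length_drop ..
      omega
    refine ⟨⟨t + n, h2⟩, Nat.le_add_right .., ?_⟩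
    rw [← hn]
    simp [List.get_eq_getElem, List.getElem_drop]
  · rintro ⟨i, hi, rfl⟩
    rw [List.mem_iff_get]
    have hl : (i : ℕ) - t < (L.drop t).length := by
      rw [List.length_drop]; have := i.isLt; omega
    refine ⟨⟨(i : ℕ) - t, hl⟩, ?_⟩
    simp only [List.get_eq_getElem, List.getElem_drop]
    congr 1
    omega

lemma mem_dropTake_iff {L : List ℕ} {t j : ℕ} {x : ℕ} :
    x ∈ (L.drop t).take j ↔ ∃ i : Fin L.length, t ≤ (i : ℕ) ∧ (i : ℕ) < t + j ∧ L.get i = x := by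
  constructor
  · intro hx
    obtain ⟨m, hm, hget⟩ := mem_take_iff.mp hx
    have h2 : t + (m : ℕ) < L.length := by
      have h := m.isLt
      have hlen : (L.drop t).length = L.length - t := List.length_drop ..
      omega
    refine ⟨⟨t + m, h2⟩, Nat.le_add_right .., ?_, ?_⟩
    · simp only [Fin.val_mk]; omega
    · rw [← hget]
      simp [List.get_eq_getElem, List.getElem_drop]
  · rintro ⟨i, h1, h2, rfl⟩
    apply mem_take_iff.mpr
    have hl : (i : ℕ) - t < (L.drop t).length := by
      rw [List.length_drop]; have := i.isLt; omega
    refine ⟨⟨(i : ℕ) - t, hl⟩, by simp only [Fin.val_mk]; omega, ?_⟩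
    simp only [List.get_eq_getElem, List.getElem_drop]
    congr 1
    omega

section Segments

variable {L : List ℕ} {j t : ℕ}

/-- middle block of length `j` starting after position `t` -/
def Bfam (L : List ℕ) (j t : ℕ) : Finset ℕ := ((L.drop t).take j).toFinset

/-- complement family: first `t` and all after position `t+j` -/
def Afam (L : List ℕ) (j t : ℕ) : Finset ℕ := (L.take t ++ L.drop (t + j)).toFinset

lemma mem_Bfam {x : ℕ} :
    x ∈ Bfam L j t ↔ ∃ i : Fin L.length, t ≤ (i : ℕ) ∧ (i : ℕ) < t + j ∧ L.get i = x := by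
  rw [Bfam, List.mem_toFinset, mem_dropTake_iff]

lemma mem_Afam {x : ℕ} :
    x ∈ Afam L j t ↔ ∃ i : Fin L.length, ((i : ℕ) < t ∨ t + j ≤ (i : ℕ)) ∧ L.get i = x := by
  rw [Afam, List.mem_toFinset, List.mem_append]
  constructor
  · rintro (h | h)
    · obtain ⟨i, h1, h2⟩ := mem_take_iff.mp h
      exact ⟨i, Or.inl h1, h2⟩
    · obtain ⟨i, h1, h2⟩ := mem_drop_iff.mp h
      exact ⟨i, Or.inr h1, h2⟩
  · rintro ⟨i, (h1 | h1), h2⟩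
    · exact Or.inl (mem_take_iff.mpr ⟨i, h1, h2⟩)
    · exact Or.inr (mem_drop_iff.mpr ⟨i, h1, h2⟩)

lemma mem_L_iff {x : ℕ} : x ∈ L.toFinset ↔ ∃ i : Fin L.length, L.get i = x := by
  rw [List.mem_toFinset, List.mem_iff_get]

lemma Bfam_subset : Bfam L j t ⊆ L.toFinset := by
  intro x hx
  obtain ⟨i, _, _, h⟩ := mem_Bfam.mp hx
  exact mem_L_iff.mpr ⟨i, h⟩

lemma Afam_subset : Afam L j t ⊆ L.toFinset := by
  intro x hx
  obtain ⟨i, _, h⟩ := mem_Afam.mp hx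
  exact mem_L_iff.mpr ⟨i, h⟩

lemma card_Bfam (hn : L.Nodup) (hlen : t + j ≤ L.length) : (Bfam L j t).card = j := by
  rw [Bfam, List.toFinset_card_of_nodup (((L.drop t).take_sublist j).nodup
    ((L.drop_sublist t).nodup hn))]
  rw [List.length_take, List.length_drop]
  omega

lemma Afam_sublist : (L.take t ++ L.drop (t + j)).Sublist L := by
  conv_rhs => rw [← List.take_append_drop t L]
  apply List.Sublist.append_left
  have : L.drop (t + j) = (L.drop t).drop j := by rw [List.drop_drop, Nat.add_comm]
  rw [this]
  exact List.drop_sublist ..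

lemma card_Afam (hn : L.Nodup) (hlen : L.length = 2 * j) (ht : t ≤ j) :
    (Afam L j t).card = j := by
  rw [Afam, List.toFinset_card_of_nodup (Afam_sublist.nodup hn)]
  rw [List.length_append, List.length_take, List.length_drop]
  omega

lemma sdiff_Bfam (hn : L.Nodup) : L.toFinset \ Bfam L j t = Afam L j t := by
  ext x
  rw [Finset.mem_sdiff, mem_L_iff, mem_Bfam, mem_Afam]
  constructor
  · rintro ⟨⟨i, rfl⟩, hnb⟩
    refine ⟨i, ?_, rfl⟩
    by_contra hc
    push_neg at hc
    exact hnb ⟨i, hc.1, hc.2, rfl⟩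
  · rintro ⟨i, hi, rfl⟩
    refine ⟨⟨i, rfl⟩, ?_⟩
    rintro ⟨i', h1, h2, hg⟩
    have : i' = i := hn.get_inj_iff.mp hg
    omega

lemma sdiff_Afam (hn : L.Nodup) : L.toFinset \ Afam L j t = Bfam L j t := by
  ext x
  rw [Finset.mem_sdiff, mem_L_iff, mem_Bfam, mem_Afam]
  constructor
  · rintro ⟨⟨i, rfl⟩, hnb⟩
    refine ⟨i, ?_, ?_, rfl⟩ <;>
    · by_contra hc
      exact hnb ⟨i, by omega, rfl⟩
  · rintro ⟨i, h1, h2, rfl⟩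
    refine ⟨⟨i, rfl⟩, ?_⟩
    rintro ⟨i', hi', hg⟩
    have : i' = i := hn.get_inj_iff.mp hg
    omega

lemma allLT_take_Bfam (hs : L.Pairwise (· < ·)) :
    allLT (L.take t).toFinset (Bfam L j t) :=
  allLT_mono (allLT_take_drop hs t t le_rfl) subset_rfl
    (fun x hx => List.mem_toFinset.mpr (((L.drop t).take_sublist j).mem (List.mem_toFinset.mp hx)))

lemma allLT_Bfam_drop (hs : L.Pairwise (· < ·)) :
    allLT (Bfam L j t) (L.drop (t + j)).toFinset := by
  apply allLT_mono (allLT_take_drop hs (t + j) (t + j) le_rfl) _ subset_rfl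
  intro x hx
  obtain ⟨i, h1, h2, h3⟩ := mem_Bfam.mp hx
  exact List.mem_toFinset.mpr (mem_take_iff.mpr ⟨i, h2, h3⟩)

lemma disjoint_take_drop (hn : L.Nodup) (hst : t ≤ j) :
    Disjoint (L.take t).toFinset (L.drop j).toFinset := by
  rw [Finset.disjoint_left]
  intro a ha hb
  obtain ⟨i, h1, h2⟩ := mem_take_iff.mp (List.mem_toFinset.mp ha)
  obtain ⟨i', h1', h2'⟩ := mem_drop_iff.mp (List.mem_toFinset.mp hb)
  have : i' = i := hn.get_inj_iff.mp (h2'.trans h2.symm)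
  omega

lemma split_Bfam (hs : L.Pairwise (· < ·)) (hn : L.Nodup) :
    Split (Bfam L j t) (Afam L j t) := by
  right
  refine ⟨(L.take t).toFinset, (L.drop (t + j)).toFinset,
    disjoint_take_drop hn (Nat.le_add_right ..), ?_, allLT_take_Bfam hs, allLT_Bfam_drop hs⟩
  rw [Afam, List.toFinset_append]

lemma split_Afam (hs : L.Pairwise (· < ·)) (hn : L.Nodup) :
    Split (Afam L j t) (Bfam L j t) := by
  left
  refine ⟨(L.take t).toFinset, (L.drop (t + j)).toFinset,
    disjoint_take_drop hn (Nat.le_add_right ..), ?_, allLT_take_Bfam hs, allLT_Bfam_drop hs⟩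
  rw [Afam, List.toFinset_append]

end Segments

section Char

open scoped Classical

variable {L : List ℕ} {j : ℕ}

lemma split_iff (hj : 1 ≤ j) (hs : L.Pairwise (· < ·)) (hlen : L.length = 2 * j)
    {A : Finset ℕ} (hA : A ⊆ L.toFinset) (hcard : A.card = j) :
    Split A (L.toFinset \ A) ↔
      (∃ t ≤ j, A = Bfam L j t) ∨ (∃ t ≤ j, A = Afam L j t) := by
  have hn : L.Nodup := hs.nodup
  have hScard : L.toFinset.card = 2 * j := by
    rw [List.toFinset_card_of_nodup hn, hlen]
  have hBcard : (L.toFinset \ A).card = j := by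
    rw [Finset.card_sdiff_of_subset hA, hScard, hcard]; omega
  constructor
  · rintro (⟨A1, A2, hd, hu, h1, h2⟩ | ⟨B1, B2, hd, hu, h1, h2⟩)
    · -- A splits around B := S \ A
      have hBne : (L.toFinset \ A).Nonempty := Finset.card_pos.mp (by omega)
      obtain ⟨b, hb⟩ := hBne
      have h13 : allLT A1 A2 := fun x hx y hy => lt_trans (h1 x hx b hb) (h2 b hb y hy)
      have hU : A1 ∪ (L.toFinset \ A) ∪ A2 = L.toFinset := by
        rw [Finset.union_right_comm, hu, Finset.union_sdiff_of_subset hA]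
      obtain ⟨e1, e2, e3⟩ := partition_eq hs A1 (L.toFinset \ A) A2 hU h1 h2 h13
      right
      refine ⟨A1.card, ?_, ?_⟩
      · calc A1.card ≤ A.card := Finset.card_le_card (hu ▸ Finset.subset_union_left)
          _ = j := hcard
      · have e3' : A2 = (L.drop (A1.card + j)).toFinset := by rw [e3, hBcard]
        rw [Afam, List.toFinset_append, ← hu, ← e1, ← e3']
    · -- B := S \ A splits around A
      have hAne : A.Nonempty := Finset.card_pos.mp (by omega)
      obtain ⟨a, ha⟩ := hAne
      have h13 : allLT B1 B2 := fun x hx y hy => lt_trans (h1 x hx a ha) (h2 a ha y hy)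
      have hU : B1 ∪ A ∪ B2 = L.toFinset := by
        rw [Finset.union_right_comm, hu, Finset.union_comm,
          Finset.union_sdiff_of_subset hA]
      obtain ⟨e1, e2, e3⟩ := partition_eq hs B1 A B2 hU h1 h2 h13
      left
      refine ⟨B1.card, ?_, ?_⟩
      · calc B1.card ≤ (L.toFinset \ A).card :=
            Finset.card_le_card (hu ▸ Finset.subset_union_left)
          _ = j := hBcard
      · rw [e2, hcard, Bfam]
  · rintro (⟨t, ht, rfl⟩ | ⟨t, ht, rfl⟩)
    · rw [sdiff_Bfam hn]
      exact split_Bfam hs hn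
    · rw [sdiff_Afam hn]
      exact split_Afam hs hn

lemma Bfam_ne (hn : L.Nodup) (hlen : L.length = 2 * j) (hj : 1 ≤ j) {t t' : ℕ}
    (h : t < t') (ht' : t' ≤ j) : Bfam L j t ≠ Bfam L j t' := by
  intro he
  have hidx : t < L.length := by omega
  have hmem : L.get ⟨t, hidx⟩ ∈ Bfam L j t := mem_Bfam.mpr ⟨⟨t, hidx⟩, le_rfl, by simp only [Fin.val_mk]; omega, rfl⟩
  rw [he] at hmem
  obtain ⟨i, h1, h2, hg⟩ := mem_Bfam.mp hmem
  have : i = ⟨t, hidx⟩ := hn.get_inj_iff.mp hg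
  subst this
  simp only [Fin.val_mk] at h1
  omega

lemma Afam_ne (hn : L.Nodup) (hlen : L.length = 2 * j) (hj : 1 ≤ j) {t t' : ℕ}
    (h : t < t') (ht' : t' ≤ j) : Afam L j t ≠ Afam L j t' := by
  intro he
  have hidx : t < L.length := by omega
  have hmem : L.get ⟨t, hidx⟩ ∈ Afam L j t' :=
    mem_Afam.mpr ⟨⟨t, hidx⟩, Or.inl h, rfl⟩
  rw [← he] at hmem
  obtain ⟨i, h1, hg⟩ := mem_Afam.mp hmem
  have : i = ⟨t, hidx⟩ := hn.get_inj_iff.mp hg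
  subst this
  simp only [Fin.val_mk] at h1
  omega

lemma Afam_zero (hlen : L.length = 2 * j) : Afam L j 0 = Bfam L j j := by
  rw [Afam, Bfam]
  congr 1
  rw [List.take_zero, List.nil_append, Nat.zero_add, List.take_of_length_le]
  rw [List.length_drop]
  omega

lemma Afam_last (hlen : L.length = 2 * j) : Afam L j j = Bfam L j 0 := by
  rw [Afam, Bfam]
  congr 1
  rw [List.drop_zero, List.drop_of_length_le (by omega), List.append_nil]

lemma Bfam_eq_Afam_cases (hn : L.Nodup) (hlen : L.length = 2 * j) (hj : 1 ≤ j)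
    {s t : ℕ} (hsj : s ≤ j) (htj : t ≤ j) (he : Bfam L j s = Afam L j t) :
    t = 0 ∨ t = j := by
  by_contra hc
  push_neg at hc
  obtain ⟨ht0, htj'⟩ := hc
  have ht0' : 0 < t := Nat.pos_of_ne_zero ht0
  have htj'' : t < j := lt_of_le_of_ne htj htj'
  have hidx0 : 0 < L.length := by omega
  have m1 : L.get ⟨0, hidx0⟩ ∈ Afam L j t :=
    mem_Afam.mpr ⟨⟨0, hidx0⟩, Or.inl (by simp only [Fin.val_mk]; omega), rfl⟩
  rw [← he] at m1
  obtain ⟨i, hi1, hi2, hg⟩ := mem_Bfam.mp m1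
  have : i = ⟨0, hidx0⟩ := hn.get_inj_iff.mp hg
  subst this
  simp only [Fin.val_mk] at hi1 hi2
  have hs0 : s = 0 := by omega
  subst hs0
  have hidx2 : 2 * j - 1 < L.length := by omega
  have m2 : L.get ⟨2 * j - 1, hidx2⟩ ∈ Afam L j t :=
    mem_Afam.mpr ⟨⟨2 * j - 1, hidx2⟩, Or.inr (by simp only [Fin.val_mk]; omega), rfl⟩
  rw [← he] at m2
  obtain ⟨i', hi1', hi2', hg'⟩ := mem_Bfam.mp m2
  have : i' = ⟨2 * j - 1, hidx2⟩ := hn.get_inj_iff.mp hg'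
  subst this
  simp only [Fin.val_mk] at hi1' hi2'
  omega

lemma card_valid (hj : 1 ≤ j) (S : Finset ℕ) (hS : S.card = 2 * j) :
    (S.powerset.filter (fun A => A.card = j ∧ Split A (S \ A))).card = 2 * j := by
  set L := S.sort (· ≤ ·) with hL
  have hs : L.Pairwise (· < ·) := (Finset.sortedLT_sort S).pairwise
  have hn : L.Nodup := hs.nodup
  have htS : L.toFinset = S := Finset.sort_toFinset S _
  have hlen : L.length = 2 * j := by rw [hL, Finset.length_sort, hS]
  have hset : S.powerset.filter (fun A => A.card = j ∧ Split A (S \ A))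
      = (Finset.range (j + 1)).image (Bfam L j) ∪ (Finset.range (j + 1)).image (Afam L j) := by
    ext A
    simp only [Finset.mem_filter, Finset.mem_powerset, Finset.mem_union, Finset.mem_image,
      Finset.mem_range, Nat.lt_succ_iff]
    constructor
    · rintro ⟨hA, hcard, hsplit⟩
      rw [← htS] at hA hsplit
      rcases (split_iff hj hs hlen hA hcard).mp hsplit with ⟨t, ht, rfl⟩ | ⟨t, ht, rfl⟩
      · exact Or.inl ⟨t, ht, rfl⟩
      · exact Or.inr ⟨t, ht, rfl⟩
    · rintro (⟨t, ht, rfl⟩ | ⟨t, ht, rfl⟩)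
      · refine ⟨htS ▸ Bfam_subset, card_Bfam hn (by omega), ?_⟩
        rw [← htS, sdiff_Bfam hn]
        exact split_Bfam hs hn
      · refine ⟨htS ▸ Afam_subset, card_Afam hn hlen ht, ?_⟩
        rw [← htS, sdiff_Afam hn]
        exact split_Afam hs hn
  rw [hset]
  have hinjB : Set.InjOn (Bfam L j) (Finset.range (j + 1)) := by
    intro a ha b hb hab
    simp only [Finset.coe_range, Set.mem_Iio, Nat.lt_succ_iff] at ha hb
    by_contra hne
    rcases lt_or_gt_of_ne hne with h | h
    · exact Bfam_ne hn hlen hj h hb hab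
    · exact Bfam_ne hn hlen hj h ha hab.symm
  have hinjA : Set.InjOn (Afam L j) (Finset.range (j + 1)) := by
    intro a ha b hb hab
    simp only [Finset.coe_range, Set.mem_Iio, Nat.lt_succ_iff] at ha hb
    by_contra hne
    rcases lt_or_gt_of_ne hne with h | h
    · exact Afam_ne hn hlen hj h hb hab
    · exact Afam_ne hn hlen hj h ha hab.symm
  have hcB : ((Finset.range (j + 1)).image (Bfam L j)).card = j + 1 := by
    rw [Finset.card_image_of_injOn hinjB, Finset.card_range]
  have hcA : ((Finset.range (j + 1)).image (Afam L j)).card = j + 1 := by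
    rw [Finset.card_image_of_injOn hinjA, Finset.card_range]
  have hint : (Finset.range (j + 1)).image (Bfam L j) ∩ (Finset.range (j + 1)).image (Afam L j)
      = {Bfam L j 0, Bfam L j j} := by
    ext A
    simp only [Finset.mem_inter, Finset.mem_image, Finset.mem_range, Nat.lt_succ_iff,
      Finset.mem_insert, Finset.mem_singleton]
    constructor
    · rintro ⟨⟨s, hsj, rfl⟩, ⟨t, htj, he⟩⟩
      rcases Bfam_eq_Afam_cases hn hlen hj hsj htj he.symm with rfl | rfl
      · right; rw [← he, Afam_zero hlen]
      · left; rw [← he, Afam_last hlen]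
    · rintro (rfl | rfl)
      · exact ⟨⟨0, by omega, rfl⟩, ⟨j, le_rfl, Afam_last hlen⟩⟩
      · exact ⟨⟨j, le_rfl, rfl⟩, ⟨0, by omega, Afam_zero hlen⟩⟩
  have hint2 : ({Bfam L j 0, Bfam L j j} : Finset (Finset ℕ)).card = 2 := by
    rw [Finset.card_insert_of_notMem, Finset.card_singleton]
    simp only [Finset.mem_singleton]
    exact Bfam_ne hn hlen hj hj le_rfl
  have := Finset.card_union_add_card_inter ((Finset.range (j + 1)).image (Bfam L j))
    ((Finset.range (j + 1)).image (Afam L j))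
  rw [hint, hint2, hcB, hcA] at this
  omega

end Char

section Assemble

open scoped Classical

lemma ws_iff_split (I J : Finset ℕ) : WeaklySeparated I J ↔ Split (I \ J) (J \ I) :=
  Iff.rfl

lemma ws_refl (I : Finset ℕ) : WeaklySeparated I I :=
  Or.inl ⟨∅, ∅, Finset.disjoint_empty_left _, by simp,
    fun i hi => absurd hi (Finset.notMem_empty i),
    fun i _ j hj => absurd hj (Finset.notMem_empty j)⟩

lemma ws_symm {I J : Finset ℕ} (h : WeaklySeparated I J) : WeaklySeparated J I := h.symm

lemma pair_facts {C A B : Finset ℕ} (hCA : Disjoint C A) (hCB : Disjoint C B)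
    (hAB : Disjoint A B) :
    (C ∪ A) \ (C ∪ B) = A ∧ (C ∪ B) \ (C ∪ A) = B ∧ (C ∪ A) ∩ (C ∪ B) = C := by
  rw [Finset.disjoint_left] at hCA hCB hAB
  have hBA : ∀ x, x ∈ B → x ∉ A := by
    intro x hx hxa; exact hAB hxa hx
  refine ⟨?_, ?_, ?_⟩ <;> ext x <;>
    simp only [Finset.mem_sdiff, Finset.mem_union, Finset.mem_inter, not_or] <;>
    constructor <;> intro h
  · tauto
  · exact ⟨Or.inr h, fun hc => hCA hc h, fun hb => hAB h hb⟩
  · tauto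
  · exact ⟨Or.inr h, fun hc => hCB hc h, hBA x h⟩
  · rcases h with ⟨h1 | h1, h2 | h2⟩ <;> first | assumption | (exfalso; tauto)
  · exact ⟨Or.inl h, Or.inl h⟩

lemma disjoint_sdiffs {I J : Finset ℕ} : Disjoint (I \ J) (J \ I) := by
  rw [Finset.disjoint_left]
  intro a ha hb
  exact (Finset.mem_sdiff.mp ha).2 (Finset.mem_sdiff.mp hb).1

lemma card_fiber (G : Finset ℕ) {k j : ℕ} (hj : 1 ≤ j) (hjk : j ≤ k)
    {C S : Finset ℕ} (hC : C ⊆ G) (hCc : C.card = k - j) (hS : S ⊆ G) (hSc : S.card = 2 * j)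
    (hd : Disjoint C S) :
    ((G.powersetCard k ×ˢ G.powersetCard k).filter
        (fun x => (WeaklySeparated x.1 x.2 ∧ (x.1 \ x.2).card = j) ∧
          (x.1 ∩ x.2, x.1 \ x.2 ∪ x.2 \ x.1) = (C, S))).card = 2 * j := by
  rw [← card_valid hj S hSc]
  apply Finset.card_bij' (fun x _ => x.1 \ x.2)
    (fun A _ => (C ∪ A, C ∪ (S \ A)))
  · -- forward maps into valid
    rintro ⟨I, J⟩ hx
    simp only [Finset.mem_filter, Finset.mem_product, Finset.mem_powersetCard,
      Prod.mk.injEq] at hx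
    obtain ⟨⟨⟨hIG, hIc⟩, ⟨hJG, hJc⟩⟩, ⟨hws, hdc⟩, hCeq, hSeq⟩ := hx
    have hdisj : Disjoint (I \ J) (J \ I) := disjoint_sdiffs
    have hSA : S \ (I \ J) = J \ I := by
      rw [← hSeq, Finset.union_sdiff_cancel_left hdisj]
    simp only [Finset.mem_filter, Finset.mem_powerset]
    refine ⟨?_, hdc, ?_⟩
    · rw [← hSeq]; exact Finset.subset_union_left
    · rw [hSA]; exact (ws_iff_split I J).mp hws
  · -- backward maps into fiber
    intro A hA
    simp only [Finset.mem_filter, Finset.mem_powerset] at hA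
    obtain ⟨hAS, hAc, hAsplit⟩ := hA
    have hBS : S \ A ⊆ S := Finset.sdiff_subset
    have hBc : (S \ A).card = j := by rw [Finset.card_sdiff_of_subset hAS, hSc]; omega
    have hCA : Disjoint C A := hd.mono_right hAS
    have hCB : Disjoint C (S \ A) := hd.mono_right hBS
    have hAB : Disjoint A (S \ A) := Finset.disjoint_sdiff
    obtain ⟨e1, e2, e3⟩ := pair_facts hCA hCB hAB
    simp only [Finset.mem_filter, Finset.mem_product, Finset.mem_powersetCard,
      Prod.mk.injEq]
    refine ⟨⟨⟨Finset.union_subset hC (hAS.trans hS), ?_⟩,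
      ⟨Finset.union_subset hC (hBS.trans hS), ?_⟩⟩, ⟨?_, ?_⟩, ?_, ?_⟩
    · rw [Finset.card_union_of_disjoint hCA, hCc, hAc]; omega
    · rw [Finset.card_union_of_disjoint hCB, hCc, hBc]; omega
    · rw [ws_iff_split, e1, e2]; exact hAsplit
    · rw [e1, hAc]
    · exact e3
    · rw [e1, e2, Finset.union_sdiff_of_subset hAS]
  · -- left inverse
    rintro ⟨I, J⟩ hx
    simp only [Finset.mem_filter, Finset.mem_product, Finset.mem_powersetCard,
      Prod.mk.injEq] at hx
    obtain ⟨⟨⟨hIG, hIc⟩, ⟨hJG, hJc⟩⟩, ⟨hws, hdc⟩, hCeq, hSeq⟩ := hx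
    have hSA : S \ (I \ J) = J \ I := by
      rw [← hSeq, Finset.union_sdiff_cancel_left disjoint_sdiffs]
    have h1 : C ∪ (I \ J) = I := by
      rw [← hCeq]; ext x
      simp only [Finset.mem_union, Finset.mem_inter, Finset.mem_sdiff]
      tauto
    have h2 : C ∪ (S \ (I \ J)) = J := by
      rw [hSA, ← hCeq]; ext x
      simp only [Finset.mem_union, Finset.mem_inter, Finset.mem_sdiff]
      tauto
    simp [h1, h2]
  · -- right inverse
    intro A hA
    simp only [Finset.mem_filter, Finset.mem_powerset] at hA
    obtain ⟨hAS, hAc, hAsplit⟩ := hA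
    have hCA : Disjoint C A := hd.mono_right hAS
    have hCB : Disjoint C (S \ A) := hd.mono_right Finset.sdiff_subset
    obtain ⟨e1, _, _⟩ := pair_facts hCA hCB Finset.disjoint_sdiff
    simp [e1]

end Assemble

section Count

open scoped Classical

lemma card_disjoint_pairs (G : Finset ℕ) (a b : ℕ) :
    ((G.powersetCard a ×ˢ G.powersetCard b).filter (fun p => Disjoint p.1 p.2)).card
      = G.card.choose a * (G.card - a).choose b := by
  rw [Finset.card_eq_sum_card_fiberwise (f := Prod.fst) (t := G.powersetCard a)
    (by rintro ⟨C, S⟩ h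
        simp only [Finset.mem_coe, Finset.mem_filter, Finset.mem_product] at h
        exact h.1.1)]
  rw [Finset.sum_congr rfl (fun C hC => ?_), Finset.sum_const, Finset.card_powersetCard,
    smul_eq_mul]
  have hCG : C ⊆ G := (Finset.mem_powersetCard.mp hC).1
  have hCc : C.card = a := (Finset.mem_powersetCard.mp hC).2
  rw [show (G.card - a).choose b = ((G \ C).powersetCard b).card by
    rw [Finset.card_powersetCard, Finset.card_sdiff_of_subset hCG, hCc]]
  refine Finset.card_bij' (fun p _ => p.2) (fun S _ => (C, S)) ?hi ?hj ?li ?ri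
  case hi =>
    rintro ⟨C', S⟩ h
    simp only [Finset.mem_filter, Finset.mem_product, Finset.mem_powersetCard] at h
    obtain ⟨⟨⟨hC', hS1⟩, hd1⟩, rfl⟩ := h
    rw [Finset.mem_powersetCard]
    exact ⟨Finset.subset_sdiff.mpr ⟨hS1.1, hd1.symm⟩, hS1.2⟩
  case hj =>
    intro S hS
    rw [Finset.mem_powersetCard, Finset.subset_sdiff] at hS
    simp only [Finset.mem_filter, Finset.mem_product, Finset.mem_powersetCard]
    exact ⟨⟨⟨⟨hCG, hCc⟩, hS.1.1, hS.2⟩, hS.1.2.symm⟩, trivial⟩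
  case li =>
    rintro ⟨C', S⟩ h
    simp only [Finset.mem_filter] at h
    have h2 : C' = C := h.2
    subst h2
    rfl
  case ri =>
    intro S _
    rfl

lemma card_Oj (G : Finset ℕ) {k j : ℕ} (hj : 1 ≤ j) (hjk : j ≤ k) :
    ((G.powersetCard k ×ˢ G.powersetCard k).filter
        (fun x => WeaklySeparated x.1 x.2 ∧ (x.1 \ x.2).card = j)).card
      = (G.card.choose (k - j) * (G.card - (k - j)).choose (2 * j)) * (2 * j) := by
  rw [Finset.card_eq_sum_card_fiberwise
    (f := fun x => (x.1 ∩ x.2, x.1 \ x.2 ∪ x.2 \ x.1))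
    (t := (G.powersetCard (k - j) ×ˢ G.powersetCard (2 * j)).filter
      (fun p => Disjoint p.1 p.2))
    (by rintro ⟨I, J⟩ h
        simp only [Finset.mem_coe, Finset.mem_filter, Finset.mem_product, Finset.mem_powersetCard] at h ⊢
        obtain ⟨⟨⟨hIG, hIc⟩, hJG, hJc⟩, _, hdc⟩ := h
        have e1 : (I \ J).card + (I ∩ J).card = I.card := Finset.card_sdiff_add_card_inter I J
        have e2 : (J \ I).card + (J ∩ I).card = J.card := Finset.card_sdiff_add_card_inter J I
        have e3 : J ∩ I = I ∩ J := Finset.inter_comm J I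
        rw [e3] at e2
        have hJIc : (J \ I).card = j := by omega
        have hdisj : Disjoint (I \ J) (J \ I) := disjoint_sdiffs
        refine ⟨⟨⟨(Finset.inter_subset_left).trans hIG, by omega⟩,
          Finset.union_subset ((Finset.sdiff_subset).trans hIG)
            ((Finset.sdiff_subset).trans hJG), ?_⟩, ?_⟩
        · rw [Finset.card_union_of_disjoint hdisj, hdc, hJIc]; omega
        · rw [Finset.disjoint_union_right]
          constructor
          · exact Finset.disjoint_left.mpr fun x hx hx2 =>
              (Finset.mem_sdiff.mp hx2).2 (Finset.mem_inter.mp hx).2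
          · exact Finset.disjoint_left.mpr fun x hx hx2 =>
              (Finset.mem_sdiff.mp hx2).2 (Finset.mem_inter.mp hx).1)]
  rw [Finset.sum_congr rfl (fun p hp => ?_), Finset.sum_const, smul_eq_mul,
    card_disjoint_pairs]
  obtain ⟨C, S⟩ := p
  simp only [Finset.mem_filter, Finset.mem_product, Finset.mem_powersetCard] at hp
  obtain ⟨⟨⟨hCG, hCc⟩, hSG, hSc⟩, hd⟩ := hp
  rw [Finset.filter_filter]
  exact card_fiber G hj hjk hCG hCc hSG hSc hd

end Count

section Final

open scoped Classical

lemma multinomial_eq {n k j : ℕ} (hj : 1 ≤ j) (hjk : j ≤ k) (hn : 2 * k ≤ n) :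
    n.choose (k - j) * (n - (k - j)).choose (2 * j)
      = n.factorial / ((k - j).factorial * (2 * j).factorial * (n - k - j).factorial) := by
  have h1 : k - j ≤ n := by omega
  have h2 : 2 * j ≤ n - (k - j) := by omega
  have e1 : n.choose (k - j) * (k - j).factorial * (n - (k - j)).factorial = n.factorial :=
    Nat.choose_mul_factorial_mul_factorial h1
  have e2 : (n - (k - j)).choose (2 * j) * (2 * j).factorial
      * (n - (k - j) - 2 * j).factorial = (n - (k - j)).factorial :=
    Nat.choose_mul_factorial_mul_factorial h2
  have e3 : n - (k - j) - 2 * j = n - k - j := by omega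
  rw [e3] at e2
  symm
  apply Nat.div_eq_of_eq_mul_left
  · positivity
  · calc n.factorial
        = n.choose (k - j) * (k - j).factorial * (n - (k - j)).factorial := e1.symm
      _ = n.choose (k - j) * (k - j).factorial *
          ((n - (k - j)).choose (2 * j) * (2 * j).factorial * (n - k - j).factorial) := by
          rw [e2]
      _ = n.choose (k - j) * (n - (k - j)).choose (2 * j) *
          ((k - j).factorial * (2 * j).factorial * (n - k - j).factorial) := by ring

lemma card_diag_pairs (G : Finset ℕ) (k : ℕ) :
    ((G.powersetCard k ×ˢ G.powersetCard k).filter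
        (fun x => WeaklySeparated x.1 x.2 ∧ (x.1 \ x.2).card = 0)).card
      = G.card.choose k := by
  rw [← Finset.card_powersetCard]
  refine Finset.card_bij' (fun x _ => x.1) (fun I _ => (I, I)) ?hi ?hj ?li ?ri
  case hi =>
    rintro ⟨I, J⟩ h
    simp only [Finset.mem_filter, Finset.mem_product] at h
    exact h.1.1
  case hj =>
    intro I hI
    simp only [Finset.mem_filter, Finset.mem_product]
    exact ⟨⟨hI, hI⟩, ws_refl I, by simp⟩
  case li =>
    rintro ⟨I, J⟩ h
    simp only [Finset.mem_filter, Finset.mem_product, Finset.mem_powersetCard] at h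
    obtain ⟨⟨⟨hIG, hIc⟩, hJG, hJc⟩, _, hc0⟩ := h
    have hsub : I ⊆ J := by
      rw [← Finset.sdiff_eq_empty_iff_subset]
      exact Finset.card_eq_zero.mp hc0
    have : I = J := Finset.eq_of_subset_of_card_le hsub (by omega)
    subst this
    rfl
  case ri =>
    intro I _
    rfl

end Final


/-- The number of unordered weakly separated pairs of `k`-subsets of `[n]` (allowing equal
pairs) equals `b_{k,n}`. -/
theorem count_weakly_separated_pairs
    (k n : ℕ) (hk : 1 ≤ k) (hn : 2 * k ≤ n) :
    (@Finset.filter (Sym2 (Finset ℕ))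
        (fun p => ∃ I J : Finset ℕ, p = s(I, J) ∧ WeaklySeparated I J)
        (Classical.decPred _)
        (((Finset.Icc 1 n).powersetCard k).sym2)).card
      = Nat.choose n k +
        ∑ j ∈ Finset.Icc 1 k,
          j * (n.factorial /
            ((k - j).factorial * (2 * j).factorial * (n - k - j).factorial)) := by
  classical
  set G := Finset.Icc 1 n with hG
  have hGc : G.card = n := by rw [hG, Nat.card_Icc]; omega
  set P := G.powersetCard k with hP
  set F := (@Finset.filter (Sym2 (Finset ℕ))
      (fun p => ∃ I J : Finset ℕ, p = s(I, J) ∧ WeaklySeparated I J)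
      (Classical.decPred _) P.sym2) with hF
  set O := (P ×ˢ P).filter (fun x : Finset ℕ × Finset ℕ => WeaklySeparated x.1 x.2) with hO
  have memO : ∀ {I J : Finset ℕ}, (I, J) ∈ O ↔ (I ∈ P ∧ J ∈ P) ∧ WeaklySeparated I J := by
    intro I J
    rw [hO, Finset.mem_filter, Finset.mem_product]
  -- ordered count via Sym2 fibers
  have hstep1 : O.card = ∑ p ∈ F, (O.filter (fun x => s(x.1, x.2) = p)).card := by
    apply Finset.card_eq_sum_card_fiberwise
    rintro ⟨I, J⟩ hx
    obtain ⟨hmem, hws⟩ := memO.mp hx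
    rw [hF, Finset.mem_coe, Finset.mem_filter]
    exact ⟨Finset.mk_mem_sym2_iff.mpr hmem, I, J, rfl, hws⟩
  have hfiber : ∀ p ∈ F, (O.filter (fun x => s(x.1, x.2) = p)).card
      = if p.IsDiag then 1 else 2 := by
    intro p hp
    rw [hF, Finset.mem_filter] at hp
    obtain ⟨hpsym, I, J, rfl, hws⟩ := hp
    rw [Finset.mk_mem_sym2_iff] at hpsym
    by_cases hIJ : I = J
    · subst hIJ
      rw [if_pos (Sym2.mk_isDiag_iff.mpr rfl), Finset.card_eq_one]
      refine ⟨(I, I), ?_⟩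
      ext ⟨A, B⟩
      simp only [Finset.mem_filter, Finset.mem_singleton, Prod.mk.injEq]
      constructor
      · rintro ⟨_, he⟩
        rw [Sym2.eq_iff] at he
        tauto
      · rintro ⟨rfl, rfl⟩
        refine ⟨memO.mpr ⟨⟨hpsym.1, hpsym.1⟩, ws_refl _⟩, rfl⟩
    · rw [if_neg (by simpa [Sym2.mk_isDiag_iff] using hIJ)]
      have heq : O.filter (fun x => s(x.1, x.2) = s(I, J)) = {(I, J), (J, I)} := by
        ext ⟨A, B⟩
        simp only [Finset.mem_filter, Finset.mem_insert, Finset.mem_singleton, Prod.mk.injEq]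
        constructor
        · rintro ⟨_, he⟩
          rw [Sym2.eq_iff] at he
          tauto
        · rintro (⟨rfl, rfl⟩ | ⟨rfl, rfl⟩)
          · exact ⟨memO.mpr ⟨⟨hpsym.1, hpsym.2⟩, hws⟩, rfl⟩
          · exact ⟨memO.mpr ⟨⟨hpsym.2, hpsym.1⟩, ws_symm hws⟩, Sym2.eq_swap⟩
      rw [heq, Finset.card_insert_of_notMem, Finset.card_singleton]
      simp only [Finset.mem_singleton, Prod.mk.injEq, not_and]
      intro h
      exact absurd h hIJ
  -- diagonal count
  set D := F.filter (fun p => p.IsDiag) with hD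
  have hDcard : D.card = n.choose k := by
    have himg : D = P.image (fun I => s(I, I)) := by
      ext p
      simp only [hD, hF, Finset.mem_filter, Finset.mem_image]
      constructor
      · rintro ⟨⟨hsym, I, J, rfl, hws⟩, hdiag⟩
        obtain rfl : I = J := Sym2.mk_isDiag_iff.mp hdiag
        exact ⟨I, (Finset.mk_mem_sym2_iff.mp hsym).1, rfl⟩
      · rintro ⟨I, hI, rfl⟩
        exact ⟨⟨Finset.mk_mem_sym2_iff.mpr ⟨hI, hI⟩, I, I, rfl, ws_refl I⟩,
          Sym2.mk_isDiag_iff.mpr rfl⟩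
    rw [himg, Finset.card_image_of_injective _ (fun I I' h => by
      rcases Sym2.eq_iff.mp h with ⟨h1, _⟩ | ⟨h1, _⟩ <;> exact h1),
      hP, Finset.card_powersetCard, hGc]
  -- 2 * F.card = O.card + D.card
  have hkey : 2 * F.card = O.card + D.card := by
    rw [hstep1, Finset.sum_congr rfl hfiber, Finset.sum_ite, Finset.sum_const,
      Finset.sum_const, smul_eq_mul, smul_eq_mul, mul_one]
    have hsplitcard := Finset.card_filter_add_card_filter_not
      (s := F) (p := fun p => p.IsDiag)
    rw [hD]
    omega
  -- ordered count by size of difference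
  have hstep2 : O.card = ∑ j ∈ Finset.range (k + 1),
      (O.filter (fun x => (x.1 \ x.2).card = j)).card := by
    apply Finset.card_eq_sum_card_fiberwise
    rintro ⟨I, J⟩ hx
    obtain ⟨hmem, _⟩ := memO.mp hx
    rw [Finset.mem_coe, Finset.mem_range, Nat.lt_succ_iff]
    calc (I \ J).card ≤ I.card := Finset.card_le_card Finset.sdiff_subset
      _ = k := (Finset.mem_powersetCard.mp hmem.1).2
  have hzero : (O.filter (fun x => (x.1 \ x.2).card = 0)).card = n.choose k := by
    rw [hO, Finset.filter_filter, ← hGc]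
    exact card_diag_pairs G k
  have hpos : ∀ j ∈ Finset.Icc 1 k, (O.filter (fun x => (x.1 \ x.2).card = j)).card
      = 2 * (j * (n.choose (k - j) * (n - (k - j)).choose (2 * j))) := by
    intro j hj
    rw [Finset.mem_Icc] at hj
    rw [hO, Finset.filter_filter, card_Oj G hj.1 hj.2, hGc]
    ring
  have hrange : Finset.range (k + 1) = insert 0 (Finset.Icc 1 k) := by
    ext x
    simp only [Finset.mem_range, Finset.mem_insert, Finset.mem_Icc]
    omega
  have hO2 : O.card = n.choose k + ∑ j ∈ Finset.Icc 1 k,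
      2 * (j * (n.choose (k - j) * (n - (k - j)).choose (2 * j))) := by
    rw [hstep2, hrange, Finset.sum_insert (by simp), hzero,
      Finset.sum_congr rfl hpos]
  -- final arithmetic
  have hsum2 : ∑ j ∈ Finset.Icc 1 k,
      2 * (j * (n.choose (k - j) * (n - (k - j)).choose (2 * j)))
      = 2 * ∑ j ∈ Finset.Icc 1 k, j * (n.factorial /
          ((k - j).factorial * (2 * j).factorial * (n - k - j).factorial)) := by
    rw [Finset.mul_sum]
    apply Finset.sum_congr rfl
    intro j hj
    rw [Finset.mem_Icc] at hj
    rw [multinomial_eq hj.1 hj.2 hn]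
  rw [hO2, hsum2, hDcard] at hkey
  omega
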